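/- For every α > 0 and every t ∈ ℝ, the matrix exponential satisfies exp(t𝒜_α) = I₄ + (sin²(αt)/α) · 𝒜_α 𝒥_α + (sin(αt)cos(αt)/α) · 𝒜_α; in 2×2 block form, exp(t𝒜_α) = [[U_α(t), (1/α)V_α(t)], [−αV_α(t), U_α(t)]], where U_α(t) = cos²(αt) I₂ + sin(αt)cos(αt) A and V_α(t) = sin²(αt) A + sin(αt)cos(αt) I₂. -/

import Mathlib

open Matrix Real

/-- The 2×2 rotation generator `A = [[0, -1], [1, 0]]`. -/
noncomputable def Amat : Matrix (Fin 2) (Fin 2) ℝ := !![0, -1; 1, 0]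

/-- The 4×4 matrix `𝒜_α = [[αA, I₂], [-α²I₂, αA]]` in 2×2 block form. -/
noncomputable def Acal (α : ℝ) : Matrix (Fin 2 ⊕ Fin 2) (Fin 2 ⊕ Fin 2) ℝ :=
  Matrix.fromBlocks (α • Amat) 1 (-(α ^ 2) • 1) (α • Amat)

/-- The 4×4 matrix `𝒥_α = [[0₂, (1/α)I₂], [-αI₂, 0₂]]` in 2×2 block form. -/
noncomputable def Jcal (α : ℝ) : Matrix (Fin 2 ⊕ Fin 2) (Fin 2 ⊕ Fin 2) ℝ :=
  Matrix.fromBlocks 0 (α⁻¹ • 1) ((-α) • 1) 0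

/-- `U_α(t) = cos²(αt) I₂ + sin(αt)cos(αt) A`. -/
noncomputable def Umat (α t : ℝ) : Matrix (Fin 2) (Fin 2) ℝ :=
  Real.cos (α * t) ^ 2 • 1 + (Real.sin (α * t) * Real.cos (α * t)) • Amat

/-- `V_α(t) = sin²(αt) A + sin(αt)cos(αt) I₂`. -/
noncomputable def Vmat (α t : ℝ) : Matrix (Fin 2) (Fin 2) ℝ :=
  Real.sin (α * t) ^ 2 • Amat + (Real.sin (α * t) * Real.cos (α * t)) • 1

attribute [local instance] Matrix.linftyOpNormedRing Matrix.linftyOpNormedAlgebra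

lemma exp_smul_of_sq_neg_one {n : Type*} [Fintype n] [DecidableEq n]
    (M : Matrix n n ℝ) (hM : M * M = -1) (θ : ℝ) :
    NormedSpace.exp (θ • M) = Real.cos θ • 1 + Real.sin θ • M := by
  let φ := Complex.liftAux M hM
  have hc : Continuous φ := φ.toLinearMap.continuous_of_finiteDimensional
  have h1 : θ • M = φ ((θ : ℂ) * Complex.I) := by
    simp [φ, Complex.liftAux_apply]
  rw [h1]; erw [← NormedSpace.map_exp φ hc]; rw [
    ← Complex.exp_eq_exp_ℂ, Complex.exp_mul_I]
  simp [φ, Complex.liftAux_apply, Algebra.algebraMap_eq_smul_one,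
    Complex.cos_ofReal_re, Complex.sin_ofReal_re]

lemma Amat_sq : Amat * Amat = -1 := by
  ext i j
  fin_cases i <;> fin_cases j <;>
    simp [Amat, Matrix.mul_apply, Fin.sum_univ_succ, Matrix.one_apply]

set_option maxHeartbeats 1000000 in
/-- For every `α > 0` and `t ∈ ℝ`,
`exp(t𝒜_α) = I₄ + (sin²(αt)/α) 𝒜_α 𝒥_α + (sin(αt)cos(αt)/α) 𝒜_α`, and in block form
`exp(t𝒜_α) = [[U_α(t), (1/α)V_α(t)], [-αV_α(t), U_α(t)]]`. -/
theorem stmt18 (α t : ℝ) (hα : 0 < α) :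
    NormedSpace.exp (t • Acal α) =
        1 + (Real.sin (α * t) ^ 2 / α) • (Acal α * Jcal α) +
          (Real.sin (α * t) * Real.cos (α * t) / α) • Acal α ∧
    NormedSpace.exp (t • Acal α) =
        Matrix.fromBlocks (Umat α t) (α⁻¹ • Vmat α t) ((-α) • Vmat α t) (Umat α t) := by
  have hα' : α ≠ 0 := ne_of_gt hα
  set c := Real.cos (α * t) with hc
  set s := Real.sin (α * t) with hs
  set D : Matrix (Fin 2 ⊕ Fin 2) (Fin 2 ⊕ Fin 2) ℝ := Matrix.fromBlocks Amat 0 0 Amat with hD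
  set W : Matrix (Fin 2) (Fin 2) ℝ := c • 1 + s • Amat with hW
  have hD2 : D * D = -1 := by
    rw [hD, Matrix.fromBlocks_multiply]
    simp [Amat_sq, ← Matrix.fromBlocks_one, Matrix.fromBlocks_neg]
  have hJ2 : Jcal α * Jcal α = -1 := by
    rw [Jcal, Matrix.fromBlocks_multiply]
    simp [smul_smul, ← Matrix.fromBlocks_one, Matrix.fromBlocks_neg]
    constructor <;> · ext i j; simp [Matrix.one_apply]; split <;> field_simp
  have hDJ : D * Jcal α = Matrix.fromBlocks 0 (α⁻¹ • Amat) ((-α) • Amat) 0 := by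
    rw [hD, Jcal, Matrix.fromBlocks_multiply]
    simp [Matrix.mul_smul, smul_smul]
  have hJD : Jcal α * D = Matrix.fromBlocks 0 (α⁻¹ • Amat) ((-α) • Amat) 0 := by
    rw [hD, Jcal, Matrix.fromBlocks_multiply]
    simp [Matrix.smul_mul]
  have hcomm : Commute ((α * t) • D) ((α * t) • Jcal α) := by
    apply Commute.smul_left; apply Commute.smul_right
    exact hDJ.trans hJD.symm
  have hsplit : t • Acal α = (α * t) • D + (α * t) • Jcal α := by
    rw [Acal, hD, Jcal]
    simp only [Matrix.fromBlocks_smul, Matrix.fromBlocks_add, smul_smul, smul_zero,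
      add_zero, zero_add]
    rw [Matrix.fromBlocks_inj]
    refine ⟨by rw [mul_comm], ?_, ?_, by rw [mul_comm]⟩
    · congr 1; field_simp
    · congr 1; ring
  have hexp : NormedSpace.exp (t • Acal α) =
      Matrix.fromBlocks (W * (c • 1)) (W * (s • α⁻¹ • 1)) (W * (s • (-α) • 1)) (W * (c • 1)) := by
    rw [hsplit]; erw [NormedSpace.exp_add_of_commute hcomm, exp_smul_of_sq_neg_one D hD2,
      exp_smul_of_sq_neg_one _ hJ2]; rw [← hc, ← hs]
    have e1 : c • (1 : Matrix (Fin 2 ⊕ Fin 2) (Fin 2 ⊕ Fin 2) ℝ) + s • D =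
        Matrix.fromBlocks W 0 0 W := by
      rw [hD, ← Matrix.fromBlocks_one]
      simp only [Matrix.fromBlocks_smul, Matrix.fromBlocks_add, smul_zero, add_zero, zero_add, hW]
    have e2 : c • (1 : Matrix (Fin 2 ⊕ Fin 2) (Fin 2 ⊕ Fin 2) ℝ) + s • Jcal α =
        Matrix.fromBlocks (c • 1) (s • α⁻¹ • 1) (s • (-α) • 1) (c • 1) := by
      rw [Jcal, ← Matrix.fromBlocks_one]
      simp only [Matrix.fromBlocks_smul, Matrix.fromBlocks_add, smul_zero, add_zero, zero_add]
    rw [e1, e2, Matrix.fromBlocks_multiply]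
    simp
  have hpyth : s ^ 2 + c ^ 2 = 1 := Real.sin_sq_add_cos_sq _
  constructor
  · rw [hexp, Acal, Jcal, Matrix.fromBlocks_multiply, ← Matrix.fromBlocks_one]
    simp only [Matrix.fromBlocks_smul, Matrix.fromBlocks_add, Matrix.mul_zero, Matrix.zero_mul,
      Matrix.mul_one, Matrix.one_mul, add_zero, zero_add, Matrix.smul_mul, Matrix.mul_smul]
    rw [Matrix.fromBlocks_inj]
    refine ⟨?_, ?_, ?_, ?_⟩ <;>
      · rw [hW]
        ext i j
        fin_cases i <;> fin_cases j <;>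
          simp [Amat, Amat_sq, Matrix.mul_apply, Fin.sum_univ_succ, Matrix.one_apply] <;>
          (try field_simp) <;> nlinarith [hpyth]
  · rw [hexp, Matrix.fromBlocks_inj]
    refine ⟨?_, ?_, ?_, ?_⟩ <;>
      · rw [hW]
        ext i j
        fin_cases i <;> fin_cases j <;>
          simp [Amat, Umat, Vmat, ← hc, ← hs, Matrix.mul_apply, Fin.sum_univ_succ,
            Matrix.one_apply] <;>
          (try field_simp) <;> nlinarith [hpyth]
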